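/- arXiv:1412.5748 — 6 statements merged into one kernel-verified Lean document; each statement's English description precedes it below -/
import Mathlib

section
/- Let f : ℂ → ℂ, z : ℝ → ℂ and θ : ℝ → ℝ be such that f is complex-differentiable at z(t₀), z is differentiable at t₀, θ is differentiable at t₀, f(z(t)) = exp(i·θ(t)) for all t in a neighborhood of t₀, and moreover z'(t₀) ≠ 0 and θ'(t₀) ≠ 0. Then f'(z(t₀)) ≠ 0 and exp(i·θ(t₀)) = (1/i) · (z'(t₀)/|z'(t₀)|) · (θ'(t₀)/|θ'(t₀)|) · (f'(z(t₀))/|f'(z(t₀))|). -/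
/-- If `f(z(t)) = exp(i θ(t))` near `t₀`, with `f` complex-differentiable at `z t₀`,
`z` differentiable at `t₀`, `θ` differentiable at `t₀`, `z'(t₀) ≠ 0` and `θ'(t₀) ≠ 0`,
then `f'(z(t₀)) ≠ 0` and
`exp(i θ(t₀)) = (1/i) (z'(t₀)/|z'(t₀)|) (θ'(t₀)/|θ'(t₀)|) (f'(z(t₀))/|f'(z(t₀))|)`. -/
theorem ahlfors_boundary_relationship
    (f : ℂ → ℂ) (z : ℝ → ℂ) (θ : ℝ → ℝ) (t₀ : ℝ)
    (hf : DifferentiableAt ℂ f (z t₀))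
    (hz : DifferentiableAt ℝ z t₀)
    (hθ : DifferentiableAt ℝ θ t₀)
    (hfz : ∀ᶠ t in nhds t₀, f (z t) = Complex.exp (Complex.I * (θ t : ℂ)))
    (hz' : deriv z t₀ ≠ 0)
    (hθ' : deriv θ t₀ ≠ 0) :
    deriv f (z t₀) ≠ 0 ∧
      Complex.exp (Complex.I * (θ t₀ : ℂ)) =
        (1 / Complex.I) * (deriv z t₀ / ((‖deriv z t₀‖ : ℝ) : ℂ)) *
          (((deriv θ t₀ : ℝ) : ℂ) / ((|deriv θ t₀| : ℝ) : ℂ)) *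
          (deriv f (z t₀) / ((‖deriv f (z t₀)‖ : ℝ) : ℂ)) := by
  have h1 : HasDerivAt (fun t => f (z t)) (deriv f (z t₀) * deriv z t₀) t₀ :=
    hf.hasDerivAt.comp t₀ hz.hasDerivAt
  have h2 : HasDerivAt (fun t => Complex.exp (Complex.I * (θ t : ℂ)))
      (Complex.exp (Complex.I * (θ t₀ : ℂ)) * (Complex.I * ((deriv θ t₀ : ℝ) : ℂ))) t₀ := by
    have := ((hθ.hasDerivAt.ofReal_comp).const_mul Complex.I).cexp
    convert this using 1
  have key : deriv f (z t₀) * deriv z t₀ =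
      Complex.exp (Complex.I * (θ t₀ : ℂ)) * (Complex.I * ((deriv θ t₀ : ℝ) : ℂ)) :=
    h1.unique (h2.congr_of_eventuallyEq hfz)
  set a := deriv z t₀
  set c := deriv f (z t₀)
  set b := deriv θ t₀
  have hexp : ‖Complex.exp (Complex.I * ((θ t₀ : ℝ) : ℂ))‖ = 1 := by
    rw [Complex.norm_exp]
    simp
  have hbC : ((b : ℂ)) ≠ 0 := by exact_mod_cast Complex.ofReal_ne_zero.mpr hθ'
  have hc : c ≠ 0 := by
    intro h
    rw [h, zero_mul] at key
    have := Complex.exp_ne_zero (Complex.I * (θ t₀ : ℂ))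
    field_simp at key
    simp [hθ'] at key
  refine ⟨hc, ?_⟩
  have hA : ((‖a‖ : ℝ) : ℂ) ≠ 0 := by
    simpa using (norm_ne_zero_iff.mpr hz')
  have hC : ((‖c‖ : ℝ) : ℂ) ≠ 0 := by
    simpa using (norm_ne_zero_iff.mpr hc)
  have hB : ((|b| : ℝ) : ℂ) ≠ 0 := by
    simpa using abs_ne_zero.mpr hθ'
  have habs : ((‖c‖ : ℝ) : ℂ) * ((‖a‖ : ℝ) : ℂ) = ((|b| : ℝ) : ℂ) := by
    have : ‖c * a‖ = ‖Complex.exp (Complex.I * (θ t₀ : ℂ)) * (Complex.I * (b : ℂ))‖ := by rw [key]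
    rw [norm_mul, norm_mul, norm_mul, hexp, Complex.norm_I, Complex.norm_real, Real.norm_eq_abs] at this
    exact_mod_cast this.trans (by ring)
  have hb2 : ((|b| : ℝ) : ℂ) * ((|b| : ℝ) : ℂ) = (b : ℂ) * (b : ℂ) := by
    exact_mod_cast congrArg (Complex.ofReal) (abs_mul_abs_self b)
  field_simp
  linear_combination (-(b : ℂ)) * key +
    (Complex.I * Complex.exp (Complex.I * (θ t₀ : ℂ)) * ((|b| : ℝ) : ℂ)) * habs +
    Complex.I * Complex.exp (Complex.I * (θ t₀ : ℂ)) * hb2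
end

section
/- Let z : ℝ → ℂ be differentiable in a neighborhood of t₀ with z' differentiable at t₀ and z'(t₀) ≠ 0, let A : ℝ → ℂ be differentiable at t₀ with A(t₀) ≠ 0, and suppose z(s) ≠ z(t₀) for all s ≠ t₀ in some punctured neighborhood of t₀. Then the limit as s → t₀ (s ≠ t₀) of (1/π)·Im( (A(t₀)/A(s)) · z'(s)/(z(s) − z(t₀)) ) equals (1/π)·( (1/2)·Im(z''(t₀)/z'(t₀)) − Im(A'(t₀)/A(t₀)) ). -/
open Filter Topology Asymptotics

-- If f a = 0, f differentiable near a, and deriv f =o (x - a), then f =o (x-a)^2.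
lemma littleO_sq_of_deriv (f : ℝ → ℂ) (a : ℝ)
    (hf : ∀ᶠ x in 𝓝 a, DifferentiableAt ℝ f x)
    (hfa : f a = 0)
    (hf' : (fun x => deriv f x) =o[𝓝 a] (fun x => x - a)) :
    f =o[𝓝 a] (fun x => (x - a) ^ 2) := by
  rw [isLittleO_iff]
  intro ε hε
  have h1 := (isLittleO_iff.mp hf' hε).and hf
  rcases Metric.eventually_nhds_iff_ball.mp h1 with ⟨δ, hδ, hball⟩
  rw [Metric.eventually_nhds_iff_ball]
  refine ⟨δ, hδ, fun x hx => ?_⟩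
  rcases eq_or_ne x a with rfl | hxa
  · simp [hfa]
  have hsub : Metric.closedBall a |x - a| ⊆ Metric.ball a δ := by
    apply Metric.closedBall_subset_ball
    simpa [Real.dist_eq] using hx
  have key : ‖f x - f a‖ ≤ (ε * |x - a|) * ‖x - a‖ := by
    apply (convex_closedBall a |x - a|).norm_image_sub_le_of_norm_deriv_le
      (fun y hy => (hball y (hsub hy)).2)
      (fun y hy => ?_) (Metric.mem_closedBall_self (abs_nonneg _))
      (by simp [Real.dist_eq])
    have := (hball y (hsub hy)).1
    calc ‖deriv f y‖ ≤ ε * ‖y - a‖ := this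
      _ ≤ ε * |x - a| := by
        apply mul_le_mul_of_nonneg_left _ hε.le
        simpa [Real.dist_eq] using hy
  calc ‖f x‖ = ‖f x - f a‖ := by rw [hfa, sub_zero]
    _ ≤ (ε * |x - a|) * ‖x - a‖ := key
    _ = ε * ‖(x - a) ^ 2‖ := by
        rw [Real.norm_eq_abs, Real.norm_eq_abs, abs_pow]; ring

-- Peano second order Taylor.
lemma taylor_two (z : ℝ → ℂ) (t₀ : ℝ)
    (hz : ∀ᶠ t in 𝓝 t₀, DifferentiableAt ℝ z t)
    (hz' : DifferentiableAt ℝ (deriv z) t₀) :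
    Tendsto (fun s => (z s - z t₀ - deriv z t₀ * ((s : ℂ) - t₀)) / ((s : ℂ) - t₀) ^ 2)
      (𝓝[≠] t₀) (𝓝 (deriv (deriv z) t₀ / 2)) := by
  set c := deriv (deriv z) t₀ with hc
  set X : ℝ → ℂ := fun s => (s : ℂ) - (t₀ : ℂ) with hX
  have hXd : ∀ x : ℝ, HasDerivAt X 1 x := fun x => by
    rw [hX]; simpa using (Complex.ofRealCLM.hasDerivAt (x := x)).sub_const (t₀ : ℂ)
  set χ : ℝ → ℂ := fun s => z s - z t₀ - deriv z t₀ * X s - (c / 2) * X s ^ 2 with hχ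
  have hχder : ∀ᶠ x in 𝓝 t₀,
      HasDerivAt χ (deriv z x - deriv z t₀ - c * X x) x := by
    filter_upwards [hz] with x hx
    have hr := hXd x
    have h2 : HasDerivAt (fun s : ℝ => deriv z t₀ * X s) (deriv z t₀) x := by
      simpa using hr.const_mul (deriv z t₀)
    have h3 : HasDerivAt (fun s : ℝ => (c / 2) * X s ^ 2) (c * X x) x := by
      have h := (hr.mul hr).const_mul (c / 2)
      have : (fun s : ℝ => (c / 2) * (X s * X s)) = fun s : ℝ => (c / 2) * X s ^ 2 := by
        funext s; ring
      simp only [Pi.mul_apply, this] at h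
      refine h.congr_deriv ?_
      ring
    exact (((hx.hasDerivAt).sub_const (z t₀)).sub h2).sub h3
  have hχo : χ =o[𝓝 t₀] (fun s => (s - t₀) ^ 2) := by
    apply littleO_sq_of_deriv
    · filter_upwards [hχder] with t ht using ht.differentiableAt
    · simp [hχ, hX]
    · have heq : ∀ᶠ x in 𝓝 t₀, deriv z x - deriv z t₀ - c * X x = deriv χ x := by
        filter_upwards [hχder] with x hx using hx.deriv.symm
      have ho : (fun x => deriv z x - deriv z t₀ - c * X x) =o[𝓝 t₀] (fun x => x - t₀) := by
        have h := hasDerivAt_iff_isLittleO.mp (hz'.hasDerivAt)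
        apply h.congr' _ (by rfl)
        filter_upwards with x
        simp only [hX, Complex.real_smul, Complex.ofReal_sub, ← hc]
        ring_nf
      exact ho.congr' heq (by rfl)
  have hχo' : χ =o[𝓝 t₀] (fun s => X s ^ 2) := by
    apply hχo.trans_isBigO
    apply isBigO_of_le
    intro x
    simp only [hX, Real.norm_eq_abs, norm_pow,
      ← Complex.ofReal_sub, Complex.norm_real, abs_pow]
    simp [sq_abs]
  have h0 : Tendsto (fun s => χ s / X s ^ 2) (𝓝 t₀) (𝓝 0) :=
    hχo'.tendsto_div_nhds_zero
  have hadd : Tendsto (fun s => χ s / X s ^ 2 + c / 2) (𝓝[≠] t₀) (𝓝 (0 + c / 2)) :=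
    (h0.mono_left nhdsWithin_le_nhds).add tendsto_const_nhds
  rw [zero_add] at hadd
  apply hadd.congr'
  filter_upwards [self_mem_nhdsWithin] with s hs
  have hne : X s ≠ 0 := by
    simp only [hX, sub_ne_zero]
    exact_mod_cast Set.mem_compl_singleton_iff.mp hs
  rw [hχ]
  simp only [hX] at hne ⊢
  field_simp
  ring

/-- Diagonal value of the generalized Neumann kernel: as `s → t₀` (`s ≠ t₀`),
`(1/π) Im((A(t₀)/A(s)) z'(s)/(z(s)-z(t₀)))` tends to
`(1/π) ((1/2) Im(z''(t₀)/z'(t₀)) - Im(A'(t₀)/A(t₀)))`. -/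
theorem generalized_neumann_kernel_diagonal
    (z : ℝ → ℂ) (A : ℝ → ℂ) (t₀ : ℝ)
    (hz : ∀ᶠ t in nhds t₀, DifferentiableAt ℝ z t)
    (hz' : DifferentiableAt ℝ (deriv z) t₀)
    (hz'0 : deriv z t₀ ≠ 0)
    (hA : DifferentiableAt ℝ A t₀)
    (hA0 : A t₀ ≠ 0)
    (hzz : ∀ᶠ s in nhdsWithin t₀ {t₀}ᶜ, z s ≠ z t₀) :
    Filter.Tendsto
      (fun s : ℝ => (1 / Real.pi) * ((A t₀ / A s) * deriv z s / (z s - z t₀)).im)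
      (nhdsWithin t₀ {t₀}ᶜ)
      (nhds ((1 / Real.pi) *
        ((1 / 2) * (deriv (deriv z) t₀ / deriv z t₀).im - (deriv A t₀ / A t₀).im))) := by
  set c := deriv (deriv z) t₀ with hc
  set z₁ := deriv z t₀ with hz₁
  set X : ℝ → ℂ := fun s => (s : ℂ) - (t₀ : ℂ) with hX
  have hXne : ∀ᶠ s in 𝓝[≠] t₀, X s ≠ 0 := by
    filter_upwards [self_mem_nhdsWithin] with s hs
    simp only [hX, sub_ne_zero]
    exact_mod_cast Set.mem_compl_singleton_iff.mp hs
  have hslope' : Tendsto (fun s => (deriv z s - z₁) / X s) (𝓝[≠] t₀) (𝓝 c) := by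
    have h := hasDerivAt_iff_tendsto_slope.mp hz'.hasDerivAt
    apply h.congr
    intro s
    rw [slope_def_module]
    simp [hX, Complex.real_smul, div_eq_inv_mul, hz₁]
  have htaylor := taylor_two z t₀ hz hz'
  have hN : Tendsto (fun s => (deriv z s * X s - (z s - z t₀)) / X s ^ 2)
      (𝓝[≠] t₀) (𝓝 (c / 2)) := by
    have h := hslope'.sub htaylor
    have heq : c - c / 2 = c / 2 := by ring
    rw [← hc, heq] at h
    apply h.congr'
    filter_upwards [hXne] with s hne
    simp only [hX] at hne ⊢
    field_simp
    ring
  have hdiff0 : DifferentiableAt ℝ z t₀ := hz.self_of_nhds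
  have hslopez : Tendsto (fun s => (z s - z t₀) / X s) (𝓝[≠] t₀) (𝓝 z₁) := by
    have h := hasDerivAt_iff_tendsto_slope.mp hdiff0.hasDerivAt
    apply h.congr
    intro s
    rw [slope_def_module]
    simp [hX, Complex.real_smul, div_eq_inv_mul]
  have hinvslope : Tendsto (fun s => X s / (z s - z t₀)) (𝓝[≠] t₀) (𝓝 z₁⁻¹) := by
    have h := hslopez.inv₀ hz'0
    apply h.congr
    intro s
    rw [inv_div]
  have hH : Tendsto (fun s => deriv z s / (z s - z t₀) - (X s)⁻¹)
      (𝓝[≠] t₀) (𝓝 (c / 2 * z₁⁻¹)) := by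
    have h := hN.mul hinvslope
    apply h.congr'
    filter_upwards [hXne, hzz] with s hne hzs
    have hne2 : z s - z t₀ ≠ 0 := sub_ne_zero.mpr hzs
    field_simp
  set g : ℝ → ℂ := fun s => A t₀ / A s with hg
  have hgder : HasDerivAt g (-(deriv A t₀ / A t₀)) t₀ := by
    have h1 : HasDerivAt g ((0 * A t₀ - A t₀ * deriv A t₀) / A t₀ ^ 2) t₀ :=
      (hasDerivAt_const t₀ (A t₀)).div hA.hasDerivAt hA0
    convert h1 using 1
    field_simp
    ring
  have hgslope : Tendsto (fun s => (g s - 1) * (X s)⁻¹) (𝓝[≠] t₀)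
      (𝓝 (-(deriv A t₀ / A t₀))) := by
    have h := hasDerivAt_iff_tendsto_slope.mp hgder
    apply h.congr
    intro s
    rw [slope_def_module]
    have hg0 : g t₀ = 1 := div_self hA0
    rw [hg0]
    simp only [hX, Complex.real_smul, smul_eq_mul]
    push_cast
    ring
  have hgcont : Tendsto g (𝓝[≠] t₀) (𝓝 1) := by
    have h : Tendsto g (𝓝 t₀) (𝓝 (A t₀ / A t₀)) :=
      tendsto_const_nhds.div hA.continuousAt.tendsto hA0
    rw [div_self hA0] at h
    exact h.mono_left nhdsWithin_le_nhds
  set L : ℂ := 1 * (c / 2 * z₁⁻¹) + -(deriv A t₀ / A t₀) with hL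
  have hmain : Tendsto (fun s => A t₀ / A s * deriv z s / (z s - z t₀) - (X s)⁻¹)
      (𝓝[≠] t₀) (𝓝 L) := by
    have h := (hgcont.mul hH).add hgslope
    apply h.congr
    intro s
    simp only [hg]
    ring
  have him : Tendsto (fun s : ℝ => (A t₀ / A s * deriv z s / (z s - z t₀)).im)
      (𝓝[≠] t₀) (𝓝 L.im) := by
    have h := (Complex.continuous_im.tendsto L).comp hmain
    apply h.congr
    intro s
    have : (X s)⁻¹.im = 0 := by
      simp [hX, ← Complex.ofReal_sub, ← Complex.ofReal_inv]
    simp [Function.comp, Complex.sub_im, this]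
  have h := him.const_mul (1 / Real.pi)
  convert h using 2
  have hLeq : L = ((1 / 2 : ℝ) : ℂ) * (c / z₁) - deriv A t₀ / A t₀ := by
    rw [hL]
    push_cast
    ring
  rw [hLeq]
  simp [Complex.sub_im, Complex.mul_im]
end

section
/- Let z : ℝ → ℂ be twice differentiable in a neighborhood of t₀ with z'' differentiable at t₀, suppose z'(t₀) ≠ 0, and suppose z(s) ≠ z(t₀) for all s ≠ t₀ in some punctured neighborhood of t₀. Then the limit as s → t₀ (s ≠ t₀) of (1/(s − t₀)) · ( z'(t₀)/(z(s) − z(t₀)) − 1/(s − t₀) + z''(t₀)/(2·z'(t₀)) ) equals z''(t₀)²/(4·z'(t₀)²) − z'''(t₀)/(6·z'(t₀)). -/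
open Filter Topology Asymptotics Set

/-- Mean-value bootstrap: if `f a = 0` and `deriv f = o((s-a)^n)` near `a`,
then `f = o((s-a)^(n+1))`. -/
lemma littleO_step (f : ℝ → ℂ) (a : ℝ) (n : ℕ)
    (hf : ∀ᶠ s in 𝓝 a, DifferentiableAt ℝ f s)
    (hfa : f a = 0)
    (hd : (deriv f) =o[𝓝 a] fun s => (s - a) ^ n) :
    f =o[𝓝 a] fun s => (s - a) ^ (n + 1) := by
  rw [Asymptotics.isLittleO_iff] at hd ⊢
  intro c hc
  have h1 := hf.and (hd hc)
  rw [Metric.eventually_nhds_iff] at h1 ⊢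
  obtain ⟨r, hr, hball⟩ := h1
  refine ⟨r, hr, fun s hs => ?_⟩
  have key : ∀ x ∈ Set.uIcc a s,
      DifferentiableAt ℝ f x ∧ ‖deriv f x‖ ≤ c * ‖(x - a) ^ n‖ := by
    intro x hx
    apply hball
    calc dist x a = |x - a| := Real.dist_eq x a
      _ ≤ |s - a| := abs_sub_left_of_mem_uIcc hx
      _ = dist s a := (Real.dist_eq s a).symm
      _ < r := hs
  have hmv : ‖f s - f a‖ ≤ (c * |s - a| ^ n) * ‖s - a‖ := by
    refine Convex.norm_image_sub_le_of_norm_hasDerivWithin_le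
      (f' := deriv f) (s := Set.uIcc a s)
      (fun x hx => ((key x hx).1.hasDerivAt).hasDerivWithinAt)
      (fun x hx => ?_) (convex_uIcc a s) Set.left_mem_uIcc Set.right_mem_uIcc
    refine le_trans (key x hx).2 ?_
    have hxa : |x - a| ≤ |s - a| := abs_sub_left_of_mem_uIcc hx
    have : ‖(x - a) ^ n‖ ≤ |s - a| ^ n := by
      rw [norm_pow, Real.norm_eq_abs]
      exact pow_le_pow_left₀ (abs_nonneg _) hxa n
    exact mul_le_mul_of_nonneg_left this (le_of_lt hc)
  rw [hfa, sub_zero] at hmv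
  calc ‖f s‖ ≤ (c * |s - a| ^ n) * ‖s - a‖ := hmv
    _ = c * ‖(s - a) ^ (n + 1)‖ := by
        rw [norm_pow, Real.norm_eq_abs]
        ring

/-- Third-order Taylor remainder estimate. -/
lemma taylor3 (z : ℝ → ℂ) (t₀ : ℝ)
    (hz : ∀ᶠ t in 𝓝 t₀, DifferentiableAt ℝ z t ∧ DifferentiableAt ℝ (deriv z) t)
    (hz'' : DifferentiableAt ℝ (deriv (deriv z)) t₀) :
    (fun s => z s - z t₀ - (((s - t₀ : ℝ) : ℂ)) * deriv z t₀
      - (((s - t₀) ^ 2 : ℝ) : ℂ) * (deriv (deriv z) t₀ / 2)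
      - (((s - t₀) ^ 3 : ℝ) : ℂ) * (deriv (deriv (deriv z)) t₀ / 6))
      =o[𝓝 t₀] fun s => (s - t₀) ^ 3 := by
  have hz1 : ∀ᶠ t in 𝓝 t₀, DifferentiableAt ℝ z t := hz.mono fun t h => h.1
  have hz2 : ∀ᶠ t in 𝓝 t₀, DifferentiableAt ℝ (deriv z) t := hz.mono fun t h => h.2
  have hP : ∀ s : ℝ, HasDerivAt (fun u : ℝ => ((u - t₀ : ℝ) : ℂ)) 1 s := by
    intro s
    simpa using ((hasDerivAt_id s).sub_const t₀).ofReal_comp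
  -- second level remainder
  have h2 : (fun s => deriv (deriv z) s - deriv (deriv z) t₀
      - ((s - t₀ : ℝ) : ℂ) * deriv (deriv (deriv z)) t₀) =o[𝓝 t₀]
      fun s => (s - t₀) ^ 1 := by
    have h := hz''.hasDerivAt
    rw [hasDerivAt_iff_isLittleO] at h
    simpa only [pow_one, ← Complex.real_smul] using h
  -- first level remainder
  have hQ2 : ∀ s : ℝ, HasDerivAt (fun u : ℝ => (((u - t₀) ^ 2 : ℝ) : ℂ))
      (((2 * (s - t₀) ^ 1 * 1 : ℝ) : ℂ)) s := fun s => by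
    exact_mod_cast (((hasDerivAt_id s).sub_const t₀).pow 2).ofReal_comp
  have hQ3 : ∀ s : ℝ, HasDerivAt (fun u : ℝ => (((u - t₀) ^ 3 : ℝ) : ℂ))
      (((3 * (s - t₀) ^ 2 * 1 : ℝ) : ℂ)) s := fun s => by
    exact_mod_cast (((hasDerivAt_id s).sub_const t₀).pow 3).ofReal_comp
  have H1 : ∀ᶠ s in 𝓝 t₀, HasDerivAt
      (fun u => deriv z u - deriv z t₀ - ((u - t₀ : ℝ) : ℂ) * deriv (deriv z) t₀
        - (((u - t₀) ^ 2 : ℝ) : ℂ) * (deriv (deriv (deriv z)) t₀ / 2))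
      (deriv (deriv z) s - deriv (deriv z) t₀
        - ((s - t₀ : ℝ) : ℂ) * deriv (deriv (deriv z)) t₀) s := by
    filter_upwards [hz2] with s hs
    have h := ((hs.hasDerivAt.sub_const (deriv z t₀)).sub
        ((hP s).mul_const (deriv (deriv z) t₀))).sub
        ((hQ2 s).mul_const (deriv (deriv (deriv z)) t₀ / 2))
    convert h using 1
    · rfl
    · rfl
    push_cast
    ring
  have ho1 : (fun s => deriv z s - deriv z t₀ - ((s - t₀ : ℝ) : ℂ) * deriv (deriv z) t₀
      - (((s - t₀) ^ 2 : ℝ) : ℂ) * (deriv (deriv (deriv z)) t₀ / 2)) =o[𝓝 t₀]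
      fun s => (s - t₀) ^ 2 := by
    have heq : (deriv fun u => deriv z u - deriv z t₀
        - ((u - t₀ : ℝ) : ℂ) * deriv (deriv z) t₀
        - (((u - t₀) ^ 2 : ℝ) : ℂ) * (deriv (deriv (deriv z)) t₀ / 2))
        =ᶠ[𝓝 t₀] fun s => deriv (deriv z) s - deriv (deriv z) t₀
          - ((s - t₀ : ℝ) : ℂ) * deriv (deriv (deriv z)) t₀ :=
      H1.mono fun s h => h.deriv
    exact littleO_step _ t₀ 1 (H1.mono fun s h => h.differentiableAt) (by simp)
      (heq.trans_isLittleO h2)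
  -- zeroth level remainder
  have H0 : ∀ᶠ s in 𝓝 t₀, HasDerivAt
      (fun u => z u - z t₀ - ((u - t₀ : ℝ) : ℂ) * deriv z t₀
        - (((u - t₀) ^ 2 : ℝ) : ℂ) * (deriv (deriv z) t₀ / 2)
        - (((u - t₀) ^ 3 : ℝ) : ℂ) * (deriv (deriv (deriv z)) t₀ / 6))
      (deriv z s - deriv z t₀ - ((s - t₀ : ℝ) : ℂ) * deriv (deriv z) t₀
        - (((s - t₀) ^ 2 : ℝ) : ℂ) * (deriv (deriv (deriv z)) t₀ / 2)) s := by
    filter_upwards [hz1] with s hs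
    have h := (((hs.hasDerivAt.sub_const (z t₀)).sub
        ((hP s).mul_const (deriv z t₀))).sub
        ((hQ2 s).mul_const (deriv (deriv z) t₀ / 2))).sub
        ((hQ3 s).mul_const (deriv (deriv (deriv z)) t₀ / 6))
    convert h using 1
    · rfl
    · rfl
    push_cast
    ring
  have heq0 : (deriv fun u => z u - z t₀ - ((u - t₀ : ℝ) : ℂ) * deriv z t₀
      - (((u - t₀) ^ 2 : ℝ) : ℂ) * (deriv (deriv z) t₀ / 2)
      - (((u - t₀) ^ 3 : ℝ) : ℂ) * (deriv (deriv (deriv z)) t₀ / 6))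
      =ᶠ[𝓝 t₀] fun s => deriv z s - deriv z t₀
        - ((s - t₀ : ℝ) : ℂ) * deriv (deriv z) t₀
        - (((s - t₀) ^ 2 : ℝ) : ℂ) * (deriv (deriv (deriv z)) t₀ / 2) :=
    H0.mono fun s h => h.deriv
  exact littleO_step _ t₀ 2 (H0.mono fun s h => h.differentiableAt) (by simp)
    (heq0.trans_isLittleO ho1)

/-- Abstract algebraic limit computation. -/
lemma algebra_limit (a b c : ℂ) (ha : a ≠ 0) (h ρ Δ : ℝ → ℂ) (l : Filter ℝ)
    (hh : Filter.Tendsto h l (𝓝 0)) (hρ : Filter.Tendsto ρ l (𝓝 0))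
    (hh0 : ∀ᶠ s in l, h s ≠ 0)
    (hΔ0 : ∀ᶠ s in l, Δ s ≠ 0)
    (hΔ : ∀ᶠ s in l, Δ s = a * h s + (b / 2) * (h s) ^ 2 + (c / 6) * (h s) ^ 3
      + ρ s * (h s) ^ 3) :
    Filter.Tendsto (fun s => (1 / h s) * (a / Δ s - 1 / h s + b / (2 * a))) l
      (𝓝 (b ^ 2 / (4 * a ^ 2) - c / (6 * a))) := by
  have hG : Filter.Tendsto
      (fun s => (b / 2) * ((b / 2) + (c / 6) * h s + ρ s * h s)
          / (a * (a + (b / 2) * h s + (c / 6) * (h s) ^ 2 + ρ s * (h s) ^ 2))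
        + (-(c / 6) - ρ s)
          / (a + (b / 2) * h s + (c / 6) * (h s) ^ 2 + ρ s * (h s) ^ 2)) l
      (𝓝 ((b / 2) * ((b / 2) + (c / 6) * 0 + 0 * 0)
          / (a * (a + (b / 2) * 0 + (c / 6) * 0 ^ 2 + 0 * 0 ^ 2))
        + (-(c / 6) - 0) / (a + (b / 2) * 0 + (c / 6) * 0 ^ 2 + 0 * 0 ^ 2))) := by
    have hF : Filter.Tendsto
        (fun s => a + (b / 2) * h s + (c / 6) * (h s) ^ 2 + ρ s * (h s) ^ 2) l
        (𝓝 (a + (b / 2) * 0 + (c / 6) * 0 ^ 2 + 0 * 0 ^ 2)) :=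
      ((tendsto_const_nhds.add (tendsto_const_nhds.mul hh)).add
        (tendsto_const_nhds.mul (hh.pow 2))).add (hρ.mul (hh.pow 2))
    have hFa : (a + (b / 2) * 0 + (c / 6) * (0:ℂ) ^ 2 + 0 * (0:ℂ) ^ 2) = a := by ring
    refine Filter.Tendsto.add ?_ ?_
    · refine Filter.Tendsto.div
        (tendsto_const_nhds.mul ((tendsto_const_nhds.add
          (tendsto_const_nhds.mul hh)).add (hρ.mul hh)))
        (tendsto_const_nhds.mul hF) ?_
      rw [hFa]
      exact mul_ne_zero ha ha
    · refine Filter.Tendsto.div (tendsto_const_nhds.sub hρ) hF ?_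
      rw [hFa]
      exact ha
  have hval : ((b / 2) * ((b / 2) + (c / 6) * 0 + 0 * 0)
      / (a * (a + (b / 2) * 0 + (c / 6) * (0:ℂ) ^ 2 + 0 * (0:ℂ) ^ 2))
      + (-(c / 6) - 0) / (a + (b / 2) * 0 + (c / 6) * (0:ℂ) ^ 2 + 0 * (0:ℂ) ^ 2))
      = b ^ 2 / (4 * a ^ 2) - c / (6 * a) := by
    field_simp
    ring
  rw [hval] at hG
  refine hG.congr' ?_
  filter_upwards [hh0, hΔ0, hΔ] with s h1 h2 h3
  obtain ⟨F, hFdef⟩ : ∃ F : ℂ, F = a + (b / 2) * h s + (c / 6) * (h s) ^ 2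
      + ρ s * (h s) ^ 2 := ⟨_, rfl⟩
  have hcube : a * h s + b / 2 * h s ^ 2 + c / 6 * h s ^ 3 + ρ s * h s ^ 3
      = F * h s := by rw [hFdef]; ring
  have hF0 : F ≠ 0 := by
    intro h0
    exact h2 (by rw [h3, hcube, h0, zero_mul])
  rw [h3, hcube, ← hFdef]
  field_simp
  rw [hFdef]; ring

/-- Local expansion of `z'(t₀)/(z(s) - z(t₀))`: as `s → t₀` (`s ≠ t₀`),
`(1/(s-t₀)) (z'(t₀)/(z(s)-z(t₀)) - 1/(s-t₀) + z''(t₀)/(2 z'(t₀)))` tends to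
`z''(t₀)²/(4 z'(t₀)²) - z'''(t₀)/(6 z'(t₀))`. -/
theorem curve_kernel_local_expansion
    (z : ℝ → ℂ) (t₀ : ℝ)
    (hz : ∀ᶠ t in nhds t₀, DifferentiableAt ℝ z t ∧ DifferentiableAt ℝ (deriv z) t)
    (hz'' : DifferentiableAt ℝ (deriv (deriv z)) t₀)
    (hz'0 : deriv z t₀ ≠ 0)
    (hzz : ∀ᶠ s in nhdsWithin t₀ {t₀}ᶜ, z s ≠ z t₀) :
    Filter.Tendsto
      (fun s : ℝ => (1 / ((s - t₀ : ℝ) : ℂ)) *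
        (deriv z t₀ / (z s - z t₀) - 1 / ((s - t₀ : ℝ) : ℂ)
          + deriv (deriv z) t₀ / (2 * deriv z t₀)))
      (nhdsWithin t₀ {t₀}ᶜ)
      (nhds ((deriv (deriv z) t₀) ^ 2 / (4 * (deriv z t₀) ^ 2)
        - deriv (deriv (deriv z)) t₀ / (6 * deriv z t₀))) := by
  have ho := taylor3 z t₀ hz hz''
  -- transfer the little-o to a complex-valued comparison function
  have hoc : (fun s => z s - z t₀ - ((s - t₀ : ℝ) : ℂ) * deriv z t₀
      - (((s - t₀) ^ 2 : ℝ) : ℂ) * (deriv (deriv z) t₀ / 2)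
      - (((s - t₀) ^ 3 : ℝ) : ℂ) * (deriv (deriv (deriv z)) t₀ / 6))
      =o[𝓝 t₀] fun s => ((s - t₀ : ℝ) : ℂ) ^ 3 := by
    rw [Asymptotics.isLittleO_iff] at ho ⊢
    intro c hc
    filter_upwards [ho hc] with s hs
    simpa only [norm_pow, Complex.norm_real, Real.norm_eq_abs] using hs
  have hρ : Filter.Tendsto (fun s => (z s - z t₀ - ((s - t₀ : ℝ) : ℂ) * deriv z t₀
      - (((s - t₀) ^ 2 : ℝ) : ℂ) * (deriv (deriv z) t₀ / 2)
      - (((s - t₀) ^ 3 : ℝ) : ℂ) * (deriv (deriv (deriv z)) t₀ / 6))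
        / ((s - t₀ : ℝ) : ℂ) ^ 3)
      (nhdsWithin t₀ {t₀}ᶜ) (𝓝 0) :=
    hoc.tendsto_div_nhds_zero.mono_left nhdsWithin_le_nhds
  have hh : Filter.Tendsto (fun s : ℝ => ((s - t₀ : ℝ) : ℂ))
      (nhdsWithin t₀ {t₀}ᶜ) (𝓝 0) := by
    have hcont : Continuous fun s : ℝ => ((s - t₀ : ℝ) : ℂ) := by continuity
    have := (hcont.tendsto t₀).mono_left (nhdsWithin_le_nhds (s := {t₀}ᶜ))
    simpa using this
  have hh0 : ∀ᶠ s in nhdsWithin t₀ {t₀}ᶜ, ((s - t₀ : ℝ) : ℂ) ≠ 0 := by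
    filter_upwards [self_mem_nhdsWithin] with s hs
    simp only [ne_eq, Complex.ofReal_eq_zero, sub_eq_zero]
    exact fun h => hs (by simp [h])
  have hΔ0 : ∀ᶠ s in nhdsWithin t₀ {t₀}ᶜ, z s - z t₀ ≠ 0 :=
    hzz.mono fun s hs => sub_ne_zero.2 hs
  refine algebra_limit (deriv z t₀) (deriv (deriv z) t₀) (deriv (deriv (deriv z)) t₀)
    hz'0 (fun s => ((s - t₀ : ℝ) : ℂ))
    (fun s => (z s - z t₀ - ((s - t₀ : ℝ) : ℂ) * deriv z t₀
      - (((s - t₀) ^ 2 : ℝ) : ℂ) * (deriv (deriv z) t₀ / 2)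
      - (((s - t₀) ^ 3 : ℝ) : ℂ) * (deriv (deriv (deriv z)) t₀ / 6))
        / ((s - t₀ : ℝ) : ℂ) ^ 3)
    (fun s => z s - z t₀) _ hh hρ hh0 hΔ0 ?_
  filter_upwards [hh0] with s hs
  rw [div_mul_cancel₀ _ (pow_ne_zero 3 hs)]
  push_cast
  ring
end

section
/- Let z : ℝ → ℂ be twice differentiable in a neighborhood of t₀ with z'' differentiable at t₀, and suppose z'(t₀) ≠ 0. Then the limit as s → t₀ (s ≠ t₀) of (1/(s − t₀)²) · ( |z'(s)/z'(t₀)| − 1 − Re(z''(t₀)/z'(t₀))·(s − t₀) ) equals (1/2)·( Re(z'''(t₀)/z'(t₀)) + (Im(z''(t₀)/z'(t₀)))² ). -/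
open Filter Topology Complex

/-- If `f` is differentiable near `t₀` and `deriv f` has derivative `L` at `t₀`, then the
second-order Taylor remainder quotient tends to `L / 2`. -/
private lemma quad_limit (h : ℝ → ℝ) (t₀ L : ℝ)
    (hh : ∀ᶠ t in 𝓝 t₀, DifferentiableAt ℝ h t)
    (hh' : HasDerivAt (deriv h) L t₀) :
    Filter.Tendsto (fun s => (h s - h t₀ - deriv h t₀ * (s - t₀)) / (s - t₀) ^ 2)
      (𝓝[≠] t₀) (𝓝 (L / 2)) := by
  have hff' : ∀ᶠ x in 𝓝[≠] t₀, HasDerivAt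
      (fun s => h s - h t₀ - deriv h t₀ * (s - t₀)) (deriv h x - deriv h t₀) x := by
    filter_upwards [nhdsWithin_le_nhds hh] with x hx
    have h1 : HasDerivAt (fun s => deriv h t₀ * (s - t₀)) (deriv h t₀) x := by
      simpa using (((hasDerivAt_id x).sub_const t₀).const_mul (deriv h t₀))
    exact (hx.hasDerivAt.sub_const (h t₀)).sub h1
  have hgg' : ∀ᶠ x in 𝓝[≠] t₀, HasDerivAt
      (fun s : ℝ => (s - t₀) ^ 2) (2 * (x - t₀)) x := by
    filter_upwards with x
    have := ((hasDerivAt_id x).sub_const t₀).pow 2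
    simp at this
    exact this
  have hg' : ∀ᶠ x in 𝓝[≠] t₀, (2 : ℝ) * (x - t₀) ≠ 0 := by
    filter_upwards [self_mem_nhdsWithin] with x hx
    simpa [sub_eq_zero] using hx
  have hfa : Filter.Tendsto (fun s => h s - h t₀ - deriv h t₀ * (s - t₀))
      (𝓝[≠] t₀) (𝓝 0) := by
    have : ContinuousAt (fun s => h s - h t₀ - deriv h t₀ * (s - t₀)) t₀ := by
      exact (hh.self_of_nhds.continuousAt.sub continuousAt_const).sub
        ((continuousAt_id.sub continuousAt_const).const_mul _)
    simpa using this.tendsto.mono_left nhdsWithin_le_nhds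
  have hga : Filter.Tendsto (fun s : ℝ => (s - t₀) ^ 2) (𝓝[≠] t₀) (𝓝 0) := by
    have : ContinuousAt (fun s : ℝ => (s - t₀) ^ 2) t₀ :=
      (continuousAt_id.sub continuousAt_const).pow 2
    simpa using this.tendsto.mono_left nhdsWithin_le_nhds
  have hdiv : Filter.Tendsto (fun x => (deriv h x - deriv h t₀) / (2 * (x - t₀)))
      (𝓝[≠] t₀) (𝓝 (L / 2)) := by
    have hs := hasDerivAt_iff_tendsto_slope.mp hh'
    have := hs.div_const 2
    refine this.congr fun x => ?_
    rw [slope_def_field]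
    rw [div_div, mul_comm]
  exact HasDerivAt.lhopital_zero_nhdsNE hff' hgg' hg' hfa hga hdiv

/-- Local expansion of `|z'(s)/z'(t₀)|`: as `s → t₀` (`s ≠ t₀`),
`(1/(s-t₀)²) (|z'(s)/z'(t₀)| - 1 - Re(z''(t₀)/z'(t₀)) (s-t₀))` tends to
`(1/2) (Re(z'''(t₀)/z'(t₀)) + Im(z''(t₀)/z'(t₀))²)`. -/
theorem abs_derivative_ratio_local_expansion
    (z : ℝ → ℂ) (t₀ : ℝ)
    (hz : ∀ᶠ t in nhds t₀, DifferentiableAt ℝ z t ∧ DifferentiableAt ℝ (deriv z) t)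
    (hz'' : DifferentiableAt ℝ (deriv (deriv z)) t₀)
    (hz'0 : deriv z t₀ ≠ 0) :
    Filter.Tendsto
      (fun s : ℝ => (1 / (s - t₀) ^ 2) *
        (‖deriv z s / deriv z t₀‖ - 1
          - (deriv (deriv z) t₀ / deriv z t₀).re * (s - t₀)))
      (nhdsWithin t₀ {t₀}ᶜ)
      (nhds ((1 / 2) * ((deriv (deriv (deriv z)) t₀ / deriv z t₀).re
        + ((deriv (deriv z) t₀ / deriv z t₀).im) ^ 2))) := by
  set c := deriv z t₀ with hc_def
  set a : ℂ := deriv (deriv z) t₀ / c with ha_def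
  set b : ℂ := deriv (deriv (deriv z)) t₀ / c with hb_def
  set p : ℝ → ℝ := fun s => (deriv z s / c).re with hp_def
  set m : ℝ → ℝ := fun s => (deriv z s / c).im with hm_def
  set p1 : ℝ → ℝ := fun s => (deriv (deriv z) s / c).re with hp1_def
  set m1 : ℝ → ℝ := fun s => (deriv (deriv z) s / c).im with hm1_def
  set q : ℝ → ℝ := fun s => p s ^ 2 + m s ^ 2 with hq_def
  set q1 : ℝ → ℝ := fun s => 2 * (p s * p1 s) + 2 * (m s * m1 s) with hq1_def
  set h : ℝ → ℝ := fun s => Real.sqrt (q s) with hh_def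
  set G : ℝ → ℝ := fun s => q1 s / (2 * Real.sqrt (q s)) with hG_def
  -- basic values at t₀
  have hpt : p t₀ = 1 := by simp [hp_def, ← hc_def, div_self hz'0]
  have hmt : m t₀ = 0 := by simp [hm_def, ← hc_def, div_self hz'0]
  have hp1t : p1 t₀ = a.re := rfl
  have hm1t : m1 t₀ = a.im := rfl
  have hqt : q t₀ = 1 := by simp [hq_def, hpt, hmt]
  have hq1t : q1 t₀ = 2 * a.re := by simp [hq1_def, hpt, hmt, hp1t]
  -- first derivatives of p, m near t₀
  have key : ∀ᶠ s in 𝓝 t₀, HasDerivAt p (p1 s) s ∧ HasDerivAt m (m1 s) s := by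
    filter_upwards [hz] with s hs
    have hf : HasDerivAt (fun t => deriv z t / c) (deriv (deriv z) s / c) s :=
      (hs.2.hasDerivAt).div_const c
    exact ⟨Complex.reCLM.hasFDerivAt.comp_hasDerivAt s hf,
      Complex.imCLM.hasFDerivAt.comp_hasDerivAt s hf⟩
  -- derivative of q near t₀
  have keyq : ∀ᶠ s in 𝓝 t₀, HasDerivAt q (q1 s) s := by
    filter_upwards [key] with s hs
    have := ((hs.1.pow 2)).add (hs.2.pow 2)
    refine this.congr_deriv (Eq.symm ?_)
    simp [hq1_def]
    ring
  -- q is positive near t₀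
  have hq_cont : ContinuousAt q t₀ := (keyq.self_of_nhds).differentiableAt.continuousAt
  have hqpos : ∀ᶠ s in 𝓝 t₀, 0 < q s := by
    have ht : Filter.Tendsto q (𝓝 t₀) (𝓝 1) := by rw [← hqt]; exact hq_cont
    exact ht (Ioi_mem_nhds one_pos)
  -- derivative of h near t₀
  have keyh : ∀ᶠ s in 𝓝 t₀, HasDerivAt h (G s) s := by
    filter_upwards [keyq, hqpos] with s hq hpos
    have := (Real.hasDerivAt_sqrt hpos.ne').comp s hq
    refine this.congr_deriv (Eq.symm ?_)
    simp [hG_def]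
    ring
  have hGt : G t₀ = a.re := by
    simp [hG_def, hqt, hq1t]
  -- second-level derivatives at t₀
  have hf3 : HasDerivAt (fun t => deriv (deriv z) t / c)
      (deriv (deriv (deriv z)) t₀ / c) t₀ := (hz''.hasDerivAt).div_const c
  have hp1' : HasDerivAt p1 b.re t₀ := Complex.reCLM.hasFDerivAt.comp_hasDerivAt t₀ hf3
  have hm1' : HasDerivAt m1 b.im t₀ := Complex.imCLM.hasFDerivAt.comp_hasDerivAt t₀ hf3
  have hp0 : HasDerivAt p (p1 t₀) t₀ := (key.self_of_nhds).1
  have hm0 : HasDerivAt m (m1 t₀) t₀ := (key.self_of_nhds).2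
  have hq1' : HasDerivAt q1
      (2 * (p1 t₀ * p1 t₀ + p t₀ * b.re) + 2 * (m1 t₀ * m1 t₀ + m t₀ * b.im)) t₀ :=
    (((hp0.mul hp1').const_mul 2)).add (((hm0.mul hm1').const_mul 2))
  -- derivative of G at t₀
  have hd : HasDerivAt (fun s => 2 * Real.sqrt (q s)) (2 * G t₀) t₀ :=
    (keyh.self_of_nhds).const_mul 2
  have hden : (2 : ℝ) * Real.sqrt (q t₀) ≠ 0 := by
    rw [hqt]; norm_num
  have hG' : HasDerivAt G (b.re + a.im ^ 2) t₀ := by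
    have := hq1'.div hd hden
    refine this.congr_deriv (Eq.symm ?_)
    rw [hqt, hGt, hq1t, hp1t, hm1t, hpt, hmt]
    have ha2 : a.re ^ 2 + a.im ^ 2 = a.re * a.re + a.im * a.im := by ring
    simp [Real.sqrt_one]
    ring
  -- transfer to deriv h
  have hderiv_eq : deriv h =ᶠ[𝓝 t₀] G := by
    filter_upwards [keyh] with s hs using hs.deriv
  have hh'' : HasDerivAt (deriv h) (b.re + a.im ^ 2) t₀ :=
    hG'.congr_of_eventuallyEq hderiv_eq
  have hdiffh : ∀ᶠ t in 𝓝 t₀, DifferentiableAt ℝ h t := by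
    filter_upwards [keyh] with s hs using hs.differentiableAt
  have hderivht : deriv h t₀ = a.re := by
    rw [(keyh.self_of_nhds).deriv, hGt]
  have hht : h t₀ = 1 := by rw [hh_def]; simp [hqt]
  -- main limit
  have main := quad_limit h t₀ (b.re + a.im ^ 2) hdiffh hh''
  have habs : ∀ s, ‖deriv z s / c‖ = h s := by
    intro s
    rw [hh_def]
    simp only [Complex.norm_def, Complex.normSq_apply, hq_def, hp_def, hm_def]
    ring_nf
  have h2 : (b.re + a.im ^ 2) / 2 = 1 / 2 * (b.re + a.im ^ 2) := by ring
  rw [h2] at main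
  refine main.congr fun s => ?_
  rw [habs s, hht, hderivht]; ring
end

section
/- Let z : ℝ → ℂ be differentiable in a neighborhood of t₀ with z' differentiable at t₀ and z' nonvanishing in that neighborhood, let S : ℝ → ℂ be differentiable at t₀ with S nonvanishing in a neighborhood of t₀, and let θ : ℝ → ℝ be differentiable at t₀. Suppose that for all t in a neighborhood of t₀, exp(i·θ(t)) = (1/i) · S(t) · (z'(t)/|z'(t)|) / conj(S(t)). Then θ'(t₀) = 2·Im( S'(t₀)/S(t₀) ) + Im( z''(t₀)/z'(t₀) ). -/
open Complex Filter in
/-- Formula for the derivative of the boundary correspondence function: if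
`exp(i θ(t)) = (1/i) S(t) (z'(t)/|z'(t)|) / conj(S(t))` near `t₀`, then
`θ'(t₀) = 2 Im(S'(t₀)/S(t₀)) + Im(z''(t₀)/z'(t₀))`. -/
theorem boundary_correspondence_derivative_szego
    (z : ℝ → ℂ) (S : ℝ → ℂ) (θ : ℝ → ℝ) (t₀ : ℝ)
    (hz : ∀ᶠ t in nhds t₀, DifferentiableAt ℝ z t)
    (hz' : DifferentiableAt ℝ (deriv z) t₀)
    (hz'0 : ∀ᶠ t in nhds t₀, deriv z t ≠ 0)
    (hS : DifferentiableAt ℝ S t₀)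
    (hS0 : ∀ᶠ t in nhds t₀, S t ≠ 0)
    (hθ : DifferentiableAt ℝ θ t₀)
    (heq : ∀ᶠ t in nhds t₀,
      Complex.exp (Complex.I * (θ t : ℂ)) =
        (1 / Complex.I) * S t * (deriv z t / (‖deriv z t‖ : ℂ)) /
          (starRingEnd ℂ) (S t)) :
    deriv θ t₀ = 2 * (deriv S t₀ / S t₀).im + (deriv (deriv z) t₀ / deriv z t₀).im := by
  set w := deriv z with hw
  have hw0 : w t₀ ≠ 0 := hz'0.self_of_nhds
  have hS00 : S t₀ ≠ 0 := hS0.self_of_nhds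
  set a := deriv θ t₀ with ha
  set S' := deriv S t₀ with hS'
  set w' := deriv w t₀ with hw'
  have hA : HasDerivAt (fun t => Complex.exp (Complex.I * (θ t : ℂ)))
      (Complex.exp (Complex.I * (θ t₀ : ℂ)) * (Complex.I * a)) t₀ :=
    ((hθ.hasDerivAt.ofReal_comp).const_mul Complex.I).cexp
  have hB : HasDerivAt (fun t => (starRingEnd ℂ) (S t)) ((starRingEnd ℂ) S') t₀ := by
    have := HasFDerivAt.comp_hasDerivAt t₀
      (Complex.conjCLE.toContinuousLinearMap.hasFDerivAt (x := S t₀)) hS.hasDerivAt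
    exact this
  have hn : DifferentiableAt ℝ (fun t => ‖w t‖) t₀ := hz'.norm ℝ hw0
  set ρ := deriv (fun t => ‖w t‖) t₀ with hρ
  have hr : HasDerivAt (fun t => ((‖w t‖ : ℝ) : ℂ)) ((ρ : ℂ)) t₀ :=
    hn.hasDerivAt.ofReal_comp
  have Feq : (fun t => Complex.exp (Complex.I * (θ t : ℂ)) * (starRingEnd ℂ) (S t)
        * ((‖w t‖ : ℝ) : ℂ))
      =ᶠ[nhds t₀] fun t => (1 / Complex.I) * S t * w t := by
    filter_upwards [heq, hz'0, hS0] with t h1 h2 h3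
    have hr0 : ((‖w t‖ : ℝ) : ℂ) ≠ 0 := by simp [norm_eq_zero, h2]
    have hcs : (starRingEnd ℂ) (S t) ≠ 0 := by simpa using h3
    rw [h1]
    field_simp
  have hL : HasDerivAt (fun t => Complex.exp (Complex.I * (θ t : ℂ)) * (starRingEnd ℂ) (S t)
        * ((‖w t‖ : ℝ) : ℂ))
      ((Complex.exp (Complex.I * (θ t₀ : ℂ)) * (Complex.I * a) * (starRingEnd ℂ) (S t₀)
        + Complex.exp (Complex.I * (θ t₀ : ℂ)) * (starRingEnd ℂ) S') * ((‖w t₀‖ : ℝ) : ℂ)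
        + Complex.exp (Complex.I * (θ t₀ : ℂ)) * (starRingEnd ℂ) (S t₀) * (ρ : ℂ)) t₀ :=
    (hA.mul hB).mul hr
  have hR : HasDerivAt (fun t => (1 / Complex.I) * S t * w t)
      ((1 / Complex.I) * S' * w t₀ + (1 / Complex.I) * S t₀ * w') t₀ :=
    ((hS.hasDerivAt.const_mul (1 / Complex.I)).mul hz'.hasDerivAt)
  have hL' := hL.congr_of_eventuallyEq Feq.symm
  have E := (hR.unique hL').symm
  have P : Complex.exp (Complex.I * (θ t₀ : ℂ)) * (starRingEnd ℂ) (S t₀) * ((‖w t₀‖ : ℝ) : ℂ)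
      = (1 / Complex.I) * S t₀ * w t₀ := Feq.self_of_nhds
  have hexp : Complex.exp (Complex.I * (θ t₀ : ℂ)) ≠ 0 := Complex.exp_ne_zero _
  have hcs0 : (starRingEnd ℂ) (S t₀) ≠ 0 := by simpa using hS00
  have hr00 : ((‖w t₀‖ : ℝ) : ℂ) ≠ 0 := by simp [hw0]
  have hr00' : ‖w t₀‖ ≠ 0 := by simpa using hw0
  have hI : Complex.I ≠ 0 := Complex.I_ne_zero
  have habs0 : ((‖w t₀‖ : ℝ) : ℂ) ≠ 0 := by simpa using hr00
  have keyL : ((Complex.exp (Complex.I * (θ t₀ : ℂ)) * (Complex.I * a) * (starRingEnd ℂ) (S t₀)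
        + Complex.exp (Complex.I * (θ t₀ : ℂ)) * (starRingEnd ℂ) S') * ((‖w t₀‖ : ℝ) : ℂ)
        + Complex.exp (Complex.I * (θ t₀ : ℂ)) * (starRingEnd ℂ) (S t₀) * (ρ : ℂ))
        / (Complex.exp (Complex.I * (θ t₀ : ℂ)) * (starRingEnd ℂ) (S t₀) * ((‖w t₀‖ : ℝ) : ℂ))
      = Complex.I * a + (starRingEnd ℂ) S' / (starRingEnd ℂ) (S t₀)
        + (((ρ / ‖w t₀‖ : ℝ)) : ℂ) := by
    push_cast
    field_simp [hexp, hcs0, habs0]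
  have keyR : ((1 / Complex.I) * S' * w t₀ + (1 / Complex.I) * S t₀ * w')
        / ((1 / Complex.I) * S t₀ * w t₀)
      = S' / S t₀ + w' / w t₀ := by
    field_simp
  have key : Complex.I * a + (starRingEnd ℂ) S' / (starRingEnd ℂ) (S t₀)
      + (((ρ / ‖w t₀‖ : ℝ)) : ℂ) = S' / S t₀ + w' / w t₀ := by
    rw [← keyL, ← keyR, ← E, ← P]
  have him := congrArg Complex.im key
  rw [← map_div₀] at him
  simp only [Complex.add_im, Complex.mul_im, Complex.I_re, Complex.I_im, Complex.ofReal_re,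
    Complex.ofReal_im, Complex.conj_im] at him
  rw [ha]
  linarith
end

section
/- Let z : ℝ → ℂ be differentiable in a neighborhood of t₀ with z' differentiable at t₀, with z' continuous and nonvanishing in a neighborhood of t₀, and suppose z(s) ≠ z(t₀) for all s ≠ t₀ in some punctured neighborhood of t₀. Then the limit as s → t₀ (s ≠ t₀) of (1/(2πi)) · ( (z'(s)/|z'(s)|)/(z(t₀) − z(s)) − conj(z'(t₀)/|z'(t₀)|)/conj(z(t₀) − z(s)) ) equals 0. -/
open Filter Complex Set


lemma peano (z : ℝ → ℂ) (t₀ : ℝ)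
    (hz : ∀ᶠ t in nhds t₀, DifferentiableAt ℝ z t)
    (hz' : DifferentiableAt ℝ (deriv z) t₀) :
    Tendsto (fun s => (z s - z t₀ - deriv z t₀ * ((s - t₀ : ℝ) : ℂ)) / ((s - t₀ : ℝ) : ℂ) ^ 2)
      (nhdsWithin t₀ {t₀}ᶜ) (nhds (deriv (deriv z) t₀ / 2)) := by
  set c₁ := deriv z t₀ with hc₁def
  set c₂ := deriv (deriv z) t₀ with hc₂def
  set g : ℝ → ℂ := fun s => z s - z t₀ - c₁ * ((s - t₀ : ℝ) : ℂ) - (c₂/2) * ((s - t₀ : ℝ) : ℂ)^2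
    with hg
  have key : ∀ ε > (0:ℝ), ∀ᶠ s in nhds t₀, ‖g s‖ ≤ ε * (s - t₀)^2 := by
    intro ε hε
    have hlo := (hasDerivAt_iff_isLittleO.1 hz'.hasDerivAt).bound hε
    have := hlo.and hz
    rw [Metric.eventually_nhds_iff_ball] at this
    obtain ⟨δ, hδ, hball⟩ := this
    rw [Metric.eventually_nhds_iff_ball]
    refine ⟨δ, hδ, fun s hs => ?_⟩
    have hgd : ∀ x ∈ Set.uIcc t₀ s, HasDerivWithinAt g
        (deriv z x - c₁ - c₂ * ((x - t₀ : ℝ) : ℂ)) (Set.uIcc t₀ s) x := by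
      intro x hx
      have hxball : x ∈ Metric.ball t₀ δ :=
        ((convex_ball t₀ δ).ordConnected.uIcc_subset (Metric.mem_ball_self hδ) hs) hx
      have hzx : DifferentiableAt ℝ z x := (hball x hxball).2
      have h1 : HasDerivAt (fun y : ℝ => ((y - t₀ : ℝ) : ℂ)) 1 x := by
        simpa using ((hasDerivAt_id x).sub_const t₀).ofReal_comp
      have hpow : HasDerivAt (fun y : ℝ => ((y - t₀ : ℝ) : ℂ)^2) (2*((x - t₀ : ℝ) : ℂ)) x := by
        have h2 := h1.mul h1
        have heq : (fun y : ℝ => ((y - t₀ : ℝ) : ℂ)^2)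
            = fun y : ℝ => ((y - t₀ : ℝ) : ℂ) * ((y - t₀ : ℝ) : ℂ) := by
          funext y; ring
        rw [heq]
        refine h2.congr_deriv ?_
        ring
      have htot := ((hzx.hasDerivAt.sub_const (z t₀)).sub (h1.const_mul c₁)).sub
        (hpow.const_mul (c₂/2))
      have : HasDerivAt g (deriv z x - c₁ - c₂ * ((x - t₀ : ℝ) : ℂ)) x := by
        refine htot.congr_deriv ?_
        push_cast
        ring
      exact this.hasDerivWithinAt
    have hbound : ∀ x ∈ Set.uIcc t₀ s, ‖deriv z x - c₁ - c₂ * ((x - t₀ : ℝ) : ℂ)‖ ≤ ε * |s - t₀| := by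
      intro x hx
      have hxball : x ∈ Metric.ball t₀ δ :=
        ((convex_ball t₀ δ).ordConnected.uIcc_subset (Metric.mem_ball_self hδ) hs) hx
      have hb := (hball x hxball).1
      have hxs : |x - t₀| ≤ |s - t₀| := by
        rcases le_total t₀ s with h | h
        · rw [Set.uIcc_of_le h] at hx
          rw [_root_.abs_of_nonneg (by linarith [hx.1]),
            _root_.abs_of_nonneg (by linarith [hx.1, hx.2])]
          linarith [hx.2]
        · rw [Set.uIcc_of_ge h] at hx
          rw [_root_.abs_of_nonpos (by linarith [hx.2]),
            _root_.abs_of_nonpos (by linarith [hx.1, hx.2])]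
          linarith [hx.1]
      calc ‖deriv z x - c₁ - c₂ * ((x - t₀ : ℝ) : ℂ)‖
          = ‖deriv z x - deriv z t₀ - (x - t₀) • c₂‖ := by
            rw [Complex.real_smul, ← hc₁def]; push_cast; ring_nf
        _ ≤ ε * ‖x - t₀‖ := hb
        _ ≤ ε * |s - t₀| := by
            rw [Real.norm_eq_abs]; exact mul_le_mul_of_nonneg_left hxs hε.le
    have hmv := Convex.norm_image_sub_le_of_norm_hasDerivWithin_le hgd hbound
      (convex_uIcc t₀ s) (Set.left_mem_uIcc) (Set.right_mem_uIcc)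
    have hg0 : g t₀ = 0 := by simp [hg]
    rw [hg0, sub_zero, Real.norm_eq_abs] at hmv
    calc ‖g s‖ ≤ ε * |s - t₀| * |s - t₀| := hmv
      _ = ε * (s - t₀)^2 := by rw [mul_assoc, abs_mul_abs_self, sq]
  rw [show (nhds (c₂/2)) = nhds (0 + c₂/2) by rw [zero_add]]
  have hmain : Tendsto (fun s => g s / ((s - t₀ : ℝ) : ℂ)^2) (nhdsWithin t₀ {t₀}ᶜ) (nhds 0) := by
    rw [NormedAddCommGroup.tendsto_nhds_zero]
    intro ε hε
    have h2 := key (ε/2) (by linarith)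
    filter_upwards [nhdsWithin_le_nhds h2, self_mem_nhdsWithin] with s hs hs'
    have hsne : s - t₀ ≠ 0 := sub_ne_zero.2 hs'
    rw [norm_div]
    have h4 : ‖((s - t₀ : ℝ) : ℂ)^2‖ = (s - t₀)^2 := by
      rw [norm_pow, Complex.norm_real, Real.norm_eq_abs, _root_.sq_abs]
    rw [h4]
    have hpos : (0:ℝ) < (s - t₀)^2 := by positivity
    have : ‖g s‖ / (s - t₀)^2 ≤ ε/2 := (div_le_iff₀ hpos).2 hs
    linarith
  have := hmain.add_const (c₂/2)
  refine this.congr' ?_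
  filter_upwards [self_mem_nhdsWithin] with s hs
  have hsne : ((s - t₀:ℝ):ℂ) ≠ 0 := Complex.ofReal_ne_zero.2 (sub_ne_zero.2 hs)
  have hexp : z s - z t₀ - c₁ * ((s - t₀ : ℝ) : ℂ) = g s + (c₂/2) * ((s - t₀ : ℝ) : ℂ)^2 := by
    simp only [hg]; ring
  rw [hexp, add_div, mul_div_assoc, div_self (pow_ne_zero 2 hsne), mul_one]


lemma absDerivAt (z : ℝ → ℂ) (t₀ : ℝ) (hz' : DifferentiableAt ℝ (deriv z) t₀)
    (h0 : deriv z t₀ ≠ 0) :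
    HasDerivAt (fun t => ‖deriv z t‖)
      (((deriv z t₀).re * (deriv (deriv z) t₀).re + (deriv z t₀).im * (deriv (deriv z) t₀).im)
        / ‖deriv z t₀‖) t₀ := by
  set c₁ := deriv z t₀
  set c₂ := deriv (deriv z) t₀
  have hre : HasDerivAt (fun t => (deriv z t).re) c₂.re t₀ :=
    (Complex.reCLM.hasFDerivAt).comp_hasDerivAt t₀ hz'.hasDerivAt
  have him : HasDerivAt (fun t => (deriv z t).im) c₂.im t₀ :=
    (Complex.imCLM.hasFDerivAt).comp_hasDerivAt t₀ hz'.hasDerivAt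
  have hsq : HasDerivAt (fun t => Complex.normSq (deriv z t))
      (2 * (c₁.re * c₂.re + c₁.im * c₂.im)) t₀ := by
    have := (hre.mul hre).add (him.mul him)
    have heq : (fun t => Complex.normSq (deriv z t))
        = fun t => (deriv z t).re * (deriv z t).re + (deriv z t).im * (deriv z t).im := by
      funext t; rw [Complex.normSq_apply]
    rw [heq]
    refine this.congr_deriv ?_
    ring
  have hnsq : Complex.normSq c₁ ≠ 0 := by
    simpa [Complex.normSq_eq_zero] using h0
  have hsqrt := (Real.hasDerivAt_sqrt hnsq).comp t₀ hsq
  have heq2 : (fun t => ‖deriv z t‖)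
      = fun t => Real.sqrt (Complex.normSq (deriv z t)) := by
    funext t; rw [Complex.norm_def]
  rw [heq2]
  refine hsqrt.congr_deriv ?_
  rw [Complex.norm_def]
  have hs : Real.sqrt (Complex.normSq c₁) ≠ 0 :=
    Real.sqrt_ne_zero'.2 (lt_of_le_of_ne (Complex.normSq_nonneg c₁) (Ne.symm hnsq))
  field_simp




lemma alg2 (c₁ d₁ c₂ d₂ A M : ℂ) (hc₁ : c₁ ≠ 0) (hd₁ : d₁ ≠ 0) (hA : A ≠ 0)
    (h1 : A^2 = c₁*d₁) (h2 : 2*M*A = d₁*c₂ + c₁*d₂) :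
    ((c₂*A - c₁*M)/A^2)/(-c₁) + (-(c₁/A)*(c₂/2)/(-c₁*c₁) - -(d₁/A)*(d₂/2)/(-d₁*d₁)) = 0 := by
  have claim1 : ((c₂*A - c₁*M)/A^2)/(-c₁) = -(c₂/(A*c₁)) + M/A^2 := by
    rw [h1]; field_simp; linear_combination (-c₂)*h1
  have claim2 : -(c₁/A)*(c₂/2)/(-c₁*c₁) = c₂/(2*(A*c₁)) := by
    field_simp
  have claim3 : -(d₁/A)*(d₂/2)/(-d₁*d₁) = d₂/(2*(A*d₁)) := by
    field_simp
  have claim4 : M/A^2 = c₂/(2*(A*c₁)) + d₂/(2*(A*d₁)) := by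
    rw [h1]
    rw [div_add_div _ _ (by simp [hA, hc₁] : 2*(A*c₁) ≠ 0) (by simp [hA, hd₁] : 2*(A*d₁) ≠ 0)]
    rw [div_eq_div_iff (by simp [hc₁, hd₁] : c₁*d₁ ≠ 0)
      (by simp [hA, hc₁, hd₁] : 2*(A*c₁)*(2*(A*d₁)) ≠ 0)]
    linear_combination (2*A*c₁*d₁) * h2
  rw [claim1, claim2, claim3, claim4]
  ring

lemma alg1 (q p nc ac c₁ : ℂ) (h : ℝ)
    (hp : p ≠ 0) (hh : (h:ℂ) ≠ 0) (hn : nc ≠ 0) (ha : ac ≠ 0) (hc₁ : c₁ ≠ 0)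
    (hca : (starRingEnd ℂ) ac = ac) :
    q/nc / p - (starRingEnd ℂ) (c₁/ac) / (starRingEnd ℂ) p
    = ((q/nc - c₁/ac)/(h:ℂ)) / (p/(h:ℂ))
      + (-(c₁/ac) * ((-p - c₁*(h:ℂ))/(h:ℂ)^2) / ((p/(h:ℂ)) * c₁)
        - (starRingEnd ℂ) (-(c₁/ac) * ((-p - c₁*(h:ℂ))/(h:ℂ)^2) / ((p/(h:ℂ)) * c₁))) := by
  have hcp : (starRingEnd ℂ) p ≠ 0 := by simpa using hp
  have hcc₁ : (starRingEnd ℂ) c₁ ≠ 0 := by simpa using hc₁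
  have key : ∀ p' c' : ℂ, p' ≠ 0 → c' ≠ 0 →
      -(c'/ac) * ((-p' - c'*(h:ℂ))/(h:ℂ)^2) / ((p'/(h:ℂ)) * c') = 1/(ac*(h:ℂ)) + (c'/ac)/p' := by
    intro p' c' hp' hc'
    field_simp
    ring
  have h3 : ((q/nc - c₁/ac)/(h:ℂ)) / (p/(h:ℂ)) = (q/nc - c₁/ac)/p := by
    rw [div_div_div_cancel_right₀]; exact hh
  simp only [map_div₀, map_mul, map_neg, map_sub, map_pow, Complex.conj_ofReal, hca]
  rw [key p c₁ hp hc₁, key ((starRingEnd ℂ) p) ((starRingEnd ℂ) c₁) hcp hcc₁, h3]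
  ring


/-- The Kerzman–Stein kernel extends continuously by `0` to the diagonal: as `s → t₀`
(`s ≠ t₀`), `(1/(2πi)) ( T(z(s))/(z(t₀)-z(s)) - conj(T(z(t₀)))/conj(z(t₀)-z(s)) )` tends to
`0`, where `T(z(t)) = z'(t)/|z'(t)|`. -/
theorem kerzman_stein_kernel_diagonal_zero
    (z : ℝ → ℂ) (t₀ : ℝ)
    (hz : ∀ᶠ t in nhds t₀, DifferentiableAt ℝ z t)
    (hz' : DifferentiableAt ℝ (deriv z) t₀)
    (hz'cont : ∀ᶠ t in nhds t₀, ContinuousAt (deriv z) t)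
    (hz'0 : ∀ᶠ t in nhds t₀, deriv z t ≠ 0)
    (hzz : ∀ᶠ s in nhdsWithin t₀ {t₀}ᶜ, z s ≠ z t₀) :
    Filter.Tendsto
      (fun s : ℝ => (1 / (2 * (Real.pi : ℂ) * Complex.I)) *
        ((deriv z s / (‖deriv z s‖ : ℂ)) / (z t₀ - z s)
          - (starRingEnd ℂ) (deriv z t₀ / (‖deriv z t₀‖ : ℂ)) /
              (starRingEnd ℂ) (z t₀ - z s)))
      (nhdsWithin t₀ {t₀}ᶜ) (nhds 0) := by
  have hc₁0 : deriv z t₀ ≠ 0 := hz'0.self_of_nhds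
  set c₁ : ℂ := deriv z t₀ with hc₁def
  set c₂ : ℂ := deriv (deriv z) t₀ with hc₂def
  set a : ℝ := ‖c₁‖ with hadef
  have ha : (0:ℝ) < a := norm_pos_iff.mpr hc₁0
  have hac : ((a:ℝ):ℂ) ≠ 0 := Complex.ofReal_ne_zero.2 ha.ne'
  set n' : ℝ := (c₁.re * c₂.re + c₁.im * c₂.im) / a with hn'def
  set C : ℂ := 1 / (2 * (Real.pi : ℂ) * Complex.I) with hCdef
  set T : ℝ → ℂ := fun s => deriv z s / ((‖deriv z s‖ : ℝ) : ℂ) with hTdef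
  -- derivative of T
  have hN : HasDerivAt (fun t => ‖deriv z t‖) n' t₀ := absDerivAt z t₀ hz' hc₁0
  have hNC : HasDerivAt (fun t => ((‖deriv z t‖ : ℝ) : ℂ)) ((n':ℝ):ℂ) t₀ :=
    hN.ofReal_comp
  have hT : HasDerivAt T ((c₂ * (a:ℂ) - c₁ * ((n':ℝ):ℂ)) / ((a:ℝ):ℂ)^2) t₀ :=
    hz'.hasDerivAt.div hNC hac
  set T' : ℂ := (c₂ * (a:ℂ) - c₁ * ((n':ℝ):ℂ)) / ((a:ℝ):ℂ)^2 with hT'def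
  -- limits
  have hslopeT : Tendsto (fun s => (T s - T t₀) / ((s - t₀ : ℝ) : ℂ))
      (nhdsWithin t₀ {t₀}ᶜ) (nhds T') := by
    have := hasDerivAt_iff_tendsto_slope.1 hT
    refine this.congr fun s => ?_
    simp [slope, Complex.real_smul, Complex.ofReal_inv, div_eq_inv_mul]
  have hW : Tendsto (fun s => (z t₀ - z s) / ((s - t₀ : ℝ) : ℂ))
      (nhdsWithin t₀ {t₀}ᶜ) (nhds (-c₁)) := by
    have h1 : Tendsto (fun s => (z s - z t₀) / ((s - t₀ : ℝ) : ℂ))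
        (nhdsWithin t₀ {t₀}ᶜ) (nhds c₁) := by
      have := hasDerivAt_iff_tendsto_slope.1 hz.self_of_nhds.hasDerivAt
      refine this.congr fun s => ?_
      simp [slope, Complex.real_smul, Complex.ofReal_inv, div_eq_inv_mul]
    have := h1.neg
    refine this.congr fun s => ?_
    rw [← neg_div, neg_sub]
  have hR : Tendsto (fun s => (-(z t₀ - z s) - c₁ * ((s - t₀ : ℝ) : ℂ)) / ((s - t₀ : ℝ) : ℂ)^2)
      (nhdsWithin t₀ {t₀}ᶜ) (nhds (c₂ / 2)) := by
    have := peano z t₀ hz hz'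
    refine this.congr fun s => ?_
    rw [neg_sub]
  -- the auxiliary function
  set B : ℝ → ℂ := fun s => -(c₁ / (a:ℂ)) *
      ((-(z t₀ - z s) - c₁ * ((s - t₀ : ℝ) : ℂ)) / ((s - t₀ : ℝ) : ℂ)^2) /
      (((z t₀ - z s) / ((s - t₀ : ℝ) : ℂ)) * c₁) with hBdef
  set LB : ℂ := -(c₁ / (a:ℂ)) * (c₂ / 2) / (-c₁ * c₁) with hLBdef
  have hBlim : Tendsto B (nhdsWithin t₀ {t₀}ᶜ) (nhds LB) := by
    have hne : -c₁ * c₁ ≠ 0 := mul_ne_zero (neg_ne_zero.2 hc₁0) hc₁0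
    exact (Tendsto.const_mul _ hR).div (hW.mul_const c₁) hne
  have hconjB : Tendsto (fun s => (starRingEnd ℂ) (B s)) (nhdsWithin t₀ {t₀}ᶜ)
      (nhds ((starRingEnd ℂ) LB)) := (Complex.continuous_conj.tendsto LB).comp hBlim
  have hGlim : Tendsto (fun s => C * (((T s - T t₀) / ((s - t₀ : ℝ) : ℂ)) /
        ((z t₀ - z s) / ((s - t₀ : ℝ) : ℂ)) + (B s - (starRingEnd ℂ) (B s))))
      (nhdsWithin t₀ {t₀}ᶜ)
      (nhds (C * (T' / (-c₁) + (LB - (starRingEnd ℂ) LB)))) := by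
    exact tendsto_const_nhds.mul
      ((hslopeT.div hW (neg_ne_zero.2 hc₁0)).add (hBlim.sub hconjB))
  -- the limit value is zero
  have hval : C * (T' / (-c₁) + (LB - (starRingEnd ℂ) LB)) = 0 := by
    have hd₁ : (starRingEnd ℂ) c₁ ≠ 0 := by simpa using hc₁0
    have h1 : ((a:ℝ):ℂ)^2 = c₁ * (starRingEnd ℂ) c₁ := by
      rw [← Complex.ofReal_pow, hadef, Complex.sq_norm, Complex.mul_conj]
    have h2 : 2 * ((n':ℝ):ℂ) * ((a:ℝ):ℂ) = (starRingEnd ℂ) c₁ * c₂ + c₁ * (starRingEnd ℂ) c₂ := by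
      have hna : (2 * (n' * a) : ℝ) = 2 * (c₁.re * c₂.re + c₁.im * c₂.im) := by
        rw [hn'def]; field_simp
      calc 2 * ((n':ℝ):ℂ) * ((a:ℝ):ℂ) = ((2 * (n' * a) : ℝ) : ℂ) := by push_cast; ring
        _ = (starRingEnd ℂ) c₁ * c₂ + c₁ * (starRingEnd ℂ) c₂ := by
            rw [hna]
            apply Complex.ext <;>
              simp [Complex.mul_re, Complex.mul_im, Complex.add_re, Complex.add_im] <;> ring
    have hLBconj : (starRingEnd ℂ) LB =
        -((starRingEnd ℂ) c₁ / ((a:ℝ):ℂ)) * ((starRingEnd ℂ) c₂ / 2) /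
          (-(starRingEnd ℂ) c₁ * (starRingEnd ℂ) c₁) := by
      rw [hLBdef]
      simp only [map_div₀, map_mul, map_neg, Complex.conj_ofReal, map_ofNat]
    rw [hT'def, hLBdef, hLBconj]
    rw [show (1 / (2 * (Real.pi : ℂ) * Complex.I)) * (((c₂ * (a:ℂ) - c₁ * ((n':ℝ):ℂ)) / ((a:ℝ):ℂ)^2) / (-c₁) + (-(c₁ / (a:ℂ)) * (c₂ / 2) / (-c₁ * c₁) - -((starRingEnd ℂ) c₁ / ((a:ℝ):ℂ)) * ((starRingEnd ℂ) c₂ / 2) / (-(starRingEnd ℂ) c₁ * (starRingEnd ℂ) c₁))) = 0 from ?_]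
    rw [alg2 c₁ ((starRingEnd ℂ) c₁) c₂ ((starRingEnd ℂ) c₂) ((a:ℝ):ℂ) ((n':ℝ):ℂ)
      hc₁0 hd₁ hac h1 h2, mul_zero]
  -- eventual equality
  rw [← hval]
  refine hGlim.congr' ?_
  have hzne : ∀ᶠ s in nhdsWithin t₀ {t₀}ᶜ, deriv z s ≠ 0 := nhdsWithin_le_nhds hz'0
  filter_upwards [hzz, self_mem_nhdsWithin, hzne] with s hs1 hs2 hs3
  have hp : z t₀ - z s ≠ 0 := sub_ne_zero.2 (Ne.symm hs1)
  have hh : ((s - t₀ : ℝ) : ℂ) ≠ 0 := Complex.ofReal_ne_zero.2 (sub_ne_zero.2 hs2)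
  have hn : ((‖deriv z s‖ : ℝ) : ℂ) ≠ 0 :=
    Complex.ofReal_ne_zero.2 (norm_ne_zero_iff.mpr hs3)
  have := alg1 (deriv z s) (z t₀ - z s) ((‖deriv z s‖ : ℝ) : ℂ) ((a:ℝ):ℂ) c₁
    (s - t₀) hp hh hn hac hc₁0 (Complex.conj_ofReal a)
  rw [hBdef, hTdef]
  exact (congrArg (fun x => C * x) this).symm
end
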